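/- arXiv:nlin/0201055 — 5 statements merged into one kernel-verified Lean document; each statement's English description precedes it below -/
import Mathlib

section
/- Liouville-type identity: for a finite set of pairwise distinct (mod period) complex numbers q₁, ..., q_M (with M = 2|K| + 2), the sum over i of the products ∏_{k ≠ i} v(q_i - q_k), where v(q) = sinh(νq/2 + γ)/sinh(νq/2), equals sinh(γ·M)/sinh(γ). In particular this sum is independent of the positions q_i. -/
open Polynomial Finset

lemma leadingCoeff_lagrange_basis {M : ℕ} (w : Fin M → ℂ) (hw : Function.Injective w)
    (i : Fin M) :
    (Lagrange.basis Finset.univ w i).coeff (M - 1) =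
      (∏ k ∈ Finset.univ.erase i, (w i - w k))⁻¹ := by
  have hinj : Set.InjOn w (Finset.univ : Finset (Fin M)) := hw.injOn
  have hdeg : (Lagrange.basis Finset.univ w i).natDegree = M - 1 := by
    simpa using Lagrange.natDegree_basis hinj (mem_univ i)
  rw [← hdeg, coeff_natDegree]
  unfold Lagrange.basis
  rw [leadingCoeff_prod, ← prod_inv_distrib]
  refine prod_congr rfl fun k hk => ?_
  have hne : w i - w k ≠ 0 := sub_ne_zero.mpr (fun h => (mem_erase.mp hk).1 (hw h.symm))
  unfold Lagrange.basisDivisor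
  rw [leadingCoeff_mul, leadingCoeff_C, (monic_X_sub_C _).leadingCoeff, mul_one]

lemma lagrange_coeff_sum {M : ℕ} (w : Fin M → ℂ) (hw : Function.Injective w)
    (F : ℂ[X]) (hF : F.degree < M) :
    ∑ i : Fin M, F.eval (w i) * (∏ k ∈ Finset.univ.erase i, (w i - w k))⁻¹ =
      F.coeff (M - 1) := by
  have hinj : Set.InjOn w (Finset.univ : Finset (Fin M)) := hw.injOn
  have hF' : F.degree < (#(Finset.univ : Finset (Fin M)) : ℕ) := by simpa using hF
  have h := Lagrange.eq_interpolate hinj hF'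
  conv_rhs => rw [h]
  rw [Lagrange.interpolate_apply, finset_sum_coeff]
  refine Finset.sum_congr rfl fun i _ => ?_
  rw [coeff_C_mul, leadingCoeff_lagrange_basis w hw i]

lemma core_identity {M : ℕ} (s : ℂ) (hs : s ≠ 1) (w : Fin M → ℂ)
    (hw0 : ∀ i, w i ≠ 0) (hw : Function.Injective w) :
    ∑ i : Fin M, ∏ k ∈ Finset.univ.erase i, (w i - s * w k) / (w i - w k) =
      (1 - s ^ M) / (1 - s) := by
  have h1s : (1 : ℂ) - s ≠ 0 := sub_ne_zero.mpr (Ne.symm hs)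
  rcases Nat.eq_zero_or_pos M with hM | hM
  · subst hM; simp
  -- the two auxiliary polynomials
  set P : ℂ[X] := ∏ k : Fin M, (X - C (s * w k)) with hP
  set Q : ℂ[X] := ∏ k : Fin M, (X - C (w k)) with hQ
  have hPm : P.Monic := monic_prod_of_monic _ _ fun k _ => monic_X_sub_C _
  have hQm : Q.Monic := monic_prod_of_monic _ _ fun k _ => monic_X_sub_C _
  have hPdeg : P.natDegree = M := by
    rw [hP, natDegree_prod _ _ fun k _ => X_sub_C_ne_zero _]
    simp only [natDegree_X_sub_C, Finset.sum_const, Finset.card_univ, Fintype.card_fin,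
      smul_eq_mul, mul_one]
  have hQdeg : Q.natDegree = M := by
    rw [hQ, natDegree_prod _ _ fun k _ => X_sub_C_ne_zero _]
    simp only [natDegree_X_sub_C, Finset.sum_const, Finset.card_univ, Fintype.card_fin,
      smul_eq_mul, mul_one]
  set G : ℂ[X] := P.divX with hG
  set H : ℂ[X] := Q.divX with hH
  have hGdeg : G.degree < M := by
    have := degree_divX_lt hPm.ne_zero
    rwa [degree_eq_natDegree hPm.ne_zero, hPdeg] at this
  have hHdeg : H.degree < M := by
    have := degree_divX_lt hQm.ne_zero
    rwa [degree_eq_natDegree hQm.ne_zero, hQdeg] at this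
  have hGc : G.coeff (M - 1) = 1 := by
    rw [hG, coeff_divX, Nat.sub_add_cancel hM, ← hPdeg, hPm.coeff_natDegree]
  have hHc : H.coeff (M - 1) = 1 := by
    rw [hH, coeff_divX, Nat.sub_add_cancel hM, ← hQdeg, hQm.coeff_natDegree]
  set c : ℂ := P.coeff 0 with hc
  set d : ℂ := Q.coeff 0 with hd
  have hceval : c = ∏ k : Fin M, (0 - s * w k) := by
    rw [hc, coeff_zero_eq_eval_zero, hP, eval_prod]; simp
  have hdeval : d = ∏ k : Fin M, (0 - w k) := by
    rw [hd, coeff_zero_eq_eval_zero, hQ, eval_prod]; simp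
  have hd0 : d ≠ 0 := by
    rw [hdeval]
    exact Finset.prod_ne_zero_iff.mpr fun k _ => by
      simpa using (hw0 k)
  have hcsd : c = s ^ M * d := by
    rw [hceval, hdeval]
    calc ∏ k : Fin M, (0 - s * w k) = ∏ k : Fin M, (s * (0 - w k)) :=
          Finset.prod_congr rfl fun k _ => by ring
      _ = (∏ _k : Fin M, s) * ∏ k : Fin M, (0 - w k) := Finset.prod_mul_distrib
      _ = s ^ M * ∏ k : Fin M, (0 - w k) := by
          rw [Finset.prod_const, Finset.card_univ, Fintype.card_fin]
  -- evaluation identities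
  have hPev : ∀ i, P.eval (w i) = G.eval (w i) * w i + c := by
    intro i
    conv_lhs => rw [← divX_mul_X_add P]
    simp [hG, hc]
  have hQev : ∀ i, H.eval (w i) * w i + d = 0 := by
    intro i
    have : Q.eval (w i) = 0 := by
      rw [hQ, eval_prod]
      exact Finset.prod_eq_zero (Finset.mem_univ i) (by simp)
    rw [← this]
    conv_rhs => rw [← divX_mul_X_add Q]
    simp [hH, hd]
  -- denominators nonzero
  have hDne : ∀ i : Fin M, ∏ k ∈ Finset.univ.erase i, (w i - w k) ≠ 0 := by
    intro i
    exact Finset.prod_ne_zero_iff.mpr fun k hk =>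
      sub_ne_zero.mpr fun h => (Finset.mem_erase.mp hk).1 (hw h.symm)
  -- per-term rewrite
  have hterm : ∀ i : Fin M,
      ∏ k ∈ Finset.univ.erase i, (w i - s * w k) / (w i - w k) =
      (1 - s)⁻¹ * (G.eval (w i) * (∏ k ∈ Finset.univ.erase i, (w i - w k))⁻¹
        + c * ((w i)⁻¹ * (∏ k ∈ Finset.univ.erase i, (w i - w k))⁻¹)) := by
    intro i
    have hNkey : (1 - s) * w i * (∏ k ∈ Finset.univ.erase i, (w i - s * w k)) =
        G.eval (w i) * w i + c := by
      have h1 : P.eval (w i) = (w i - s * w i) * ∏ k ∈ Finset.univ.erase i, (w i - s * w k) := by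
        rw [hP, eval_prod]
        simp only [eval_sub, eval_X, eval_C]
        exact (Finset.mul_prod_erase Finset.univ _ (Finset.mem_univ i)).symm
      calc (1 - s) * w i * (∏ k ∈ Finset.univ.erase i, (w i - s * w k))
          = (w i - s * w i) * ∏ k ∈ Finset.univ.erase i, (w i - s * w k) := by ring
        _ = P.eval (w i) := h1.symm
        _ = G.eval (w i) * w i + c := hPev i
    have hwi := hw0 i
    have hN : ∏ k ∈ Finset.univ.erase i, (w i - s * w k) =
        (G.eval (w i) * w i + c) / ((1 - s) * w i) := by
      rw [eq_div_iff (mul_ne_zero h1s hwi)]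
      linear_combination hNkey
    rw [Finset.prod_div_distrib, div_eq_mul_inv, hN, div_eq_mul_inv, mul_inv]
    have hcancel : w i * (w i)⁻¹ = 1 := mul_inv_cancel₀ hwi
    linear_combination ((1 - s)⁻¹ * Polynomial.eval (w i) G *
      (∏ k ∈ Finset.univ.erase i, (w i - w k))⁻¹) * hcancel
  rw [Finset.sum_congr rfl fun i _ => hterm i]
  rw [← Finset.mul_sum, Finset.sum_add_distrib, ← Finset.mul_sum]
  have hS1 : ∑ i : Fin M, G.eval (w i) * (∏ k ∈ Finset.univ.erase i, (w i - w k))⁻¹ = 1 := by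
    rw [lagrange_coeff_sum w hw G hGdeg, hGc]
  have hinv : ∀ i : Fin M, (w i)⁻¹ = -d⁻¹ * H.eval (w i) := by
    intro i
    have h := hQev i
    have hwi := hw0 i
    field_simp
    linear_combination h
  have hS2 : ∑ i : Fin M, (w i)⁻¹ * (∏ k ∈ Finset.univ.erase i, (w i - w k))⁻¹ = -d⁻¹ := by
    calc ∑ i : Fin M, (w i)⁻¹ * (∏ k ∈ Finset.univ.erase i, (w i - w k))⁻¹
        = ∑ i : Fin M, -d⁻¹ * (H.eval (w i) * (∏ k ∈ Finset.univ.erase i, (w i - w k))⁻¹) := by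
          refine Finset.sum_congr rfl fun i _ => ?_
          rw [hinv i]; ring
      _ = -d⁻¹ * ∑ i : Fin M, H.eval (w i) * (∏ k ∈ Finset.univ.erase i, (w i - w k))⁻¹ := by
          rw [← Finset.mul_sum]
      _ = -d⁻¹ := by rw [lagrange_coeff_sum w hw H hHdeg, hHc, mul_one]
  rw [hS1, hS2, hcsd]
  field_simp
  ring

lemma csinh_eq (z : ℂ) : Complex.sinh z = (Complex.exp z - Complex.exp (-z)) / 2 := rfl

/-- Liouville-type identity
`∑_i ∏_{k ≠ i} v(q_i - q_k) = sinh(Mγ)/sinh γ` for `v(q) = sinh(νq/2+γ)/sinh(νq/2)`. -/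
theorem liouville_identity (γ ν : ℂ) (hγ : Complex.sinh γ ≠ 0) (M : ℕ)
    (q : Fin M → ℂ)
    (hq : ∀ i k : Fin M, i ≠ k → Complex.sinh (ν * (q i - q k) / 2) ≠ 0) :
    ∑ i : Fin M, ∏ k ∈ Finset.univ.erase i,
        Complex.sinh (ν * (q i - q k) / 2 + γ) / Complex.sinh (ν * (q i - q k) / 2) =
      Complex.sinh ((M : ℂ) * γ) / Complex.sinh γ := by
  rcases Nat.eq_zero_or_pos M with hM | hM
  · subst hM; simp
  set A : Fin M → ℂ := fun i => Complex.exp (ν * q i / 2) with hA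
  set w : Fin M → ℂ := fun i => Complex.exp (ν * q i) with hwdef
  set T : ℂ := Complex.exp γ with hT
  set s : ℂ := Complex.exp (-(2 * γ)) with hsdef
  have hT0 : T ≠ 0 := Complex.exp_ne_zero γ
  have hA0 : ∀ i, A i ≠ 0 := fun i => Complex.exp_ne_zero _
  have hw0 : ∀ i, w i ≠ 0 := fun i => Complex.exp_ne_zero _
  have hsT : s * T ^ 2 = 1 := by
    rw [hsdef, hT, sq, ← Complex.exp_add, ← Complex.exp_add]
    rw [show -(2 * γ) + (γ + γ) = 0 by ring, Complex.exp_zero]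
  have hTinv : Complex.exp (-γ) = T⁻¹ := by rw [hT, Complex.exp_neg]
  have hsinγ : Complex.sinh γ = (T - T⁻¹) / 2 := by
    rw [csinh_eq, hTinv, hT]
  have hTT : T - T⁻¹ ≠ 0 := by
    intro h
    apply hγ
    rw [hsinγ, h, zero_div]
  have hs1 : s ≠ 1 := by
    intro h
    rw [h, one_mul] at hsT
    apply hTT
    field_simp
    linear_combination hsT
  have h1s : (1 : ℂ) - s ≠ 0 := sub_ne_zero.mpr (Ne.symm hs1)
  have hwA : ∀ i, w i = A i ^ 2 := by
    intro i
    rw [hwdef, hA, sq, ← Complex.exp_add]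
    ring_nf
  have hexpx : ∀ i k : Fin M, Complex.exp (ν * (q i - q k) / 2) = A i * (A k)⁻¹ := by
    intro i k
    rw [show ν * (q i - q k) / 2 = ν * q i / 2 - ν * q k / 2 by ring, Complex.exp_sub,
      div_eq_mul_inv]
  have wsub : ∀ i k : Fin M, w i - w k =
      2 * A i * A k * Complex.sinh (ν * (q i - q k) / 2) := by
    intro i k
    rw [csinh_eq, Complex.exp_neg, hexpx i k, hwA i, hwA k]
    field_simp [hA0 i, hA0 k]
  have hnum : ∀ i k : Fin M, 2 * A i * A k * Complex.sinh (ν * (q i - q k) / 2 + γ) =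
      T * (w i - s * w k) := by
    intro i k
    rw [csinh_eq, Complex.exp_add, neg_add, Complex.exp_add,
      Complex.exp_neg (ν * (q i - q k) / 2), Complex.exp_neg γ, hexpx i k,
      hwA i, hwA k]
    field_simp [hA0 i, hA0 k, hT0]
    linear_combination (A k ^ 2) * hsT
  have hwinj : Function.Injective w := by
    intro i k h
    by_contra hik
    apply hq i k hik
    have := wsub i k
    rw [h, sub_self] at this
    have h2 : (2 : ℂ) * A i * A k ≠ 0 := by
      simp [hA0 i, hA0 k]
    field_simp at this
    exact (mul_eq_zero.mp this.symm).resolve_left h2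
  have hne : ∀ i k : Fin M, i ≠ k → w i - w k ≠ 0 := by
    intro i k hik h
    exact hwinj (sub_eq_zero.mp h) |> hik
  have hfac : ∀ i k : Fin M, i ≠ k →
      Complex.sinh (ν * (q i - q k) / 2 + γ) / Complex.sinh (ν * (q i - q k) / 2) =
      T * ((w i - s * w k) / (w i - w k)) := by
    intro i k hik
    rw [mul_div_assoc', div_eq_div_iff (hq i k hik) (hne i k hik)]
    linear_combination Complex.sinh (ν * (q i - q k) / 2 + γ) * wsub i k +
      Complex.sinh (ν * (q i - q k) / 2) * hnum i k
  have hsum : ∑ i : Fin M, ∏ k ∈ Finset.univ.erase i,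
      Complex.sinh (ν * (q i - q k) / 2 + γ) / Complex.sinh (ν * (q i - q k) / 2) =
      T ^ (M - 1) * ((1 - s ^ M) / (1 - s)) := by
    rw [← core_identity s hs1 w hw0 hwinj, Finset.mul_sum]
    refine Finset.sum_congr rfl fun i _ => ?_
    rw [Finset.prod_congr rfl fun k hk => hfac i k fun h =>
      (Finset.mem_erase.mp hk).1 h.symm]
    rw [Finset.prod_mul_distrib, Finset.prod_const, Finset.card_erase_of_mem (Finset.mem_univ i),
      Finset.card_univ, Fintype.card_fin]
  rw [hsum]
  have hTM : Complex.exp ((M : ℂ) * γ) = T ^ M := by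
    rw [hT, ← Complex.exp_nat_mul]
  have hTM0 : T ^ M ≠ 0 := pow_ne_zero _ hT0
  have hsinhM : Complex.sinh ((M : ℂ) * γ) = (T ^ M - (T ^ M)⁻¹) / 2 := by
    rw [csinh_eq, Complex.exp_neg, hTM]
  have hsM : s ^ M * (T ^ M) ^ 2 = 1 := by
    calc s ^ M * (T ^ M) ^ 2 = (s * T ^ 2) ^ M := by ring
      _ = 1 := by rw [hsT, one_pow]
  have hMT : T ^ (M - 1) * T = T ^ M := by
    rw [← pow_succ, Nat.sub_add_cancel hM]
  rw [eq_div_iff hγ, hsinγ, hsinhM]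
  have main : ∀ u m ps : ℂ, u ≠ 0 → m * T = u → ps * u ^ 2 = 1 →
      m * ((1 - ps) / (1 - s)) * ((T - T⁻¹) / 2) = (u - u⁻¹) / 2 := by
    intro u m ps hu0 h1 h2
    field_simp
    linear_combination (u * T * (1 - s) * (1 - ps)) * h1 - (T * (1 - s)) * h2 + (m * u * (1 - ps)) * hsT
  exact main _ _ _ hTM0 hMT hsM
end

section
/- In the rational case, the Liouville-type identity degenerates: for pairwise distinct real numbers q₁, ..., q_M and v(q) = (q + g)/q, the sum ∑_{i=1}^M ∏_{k≠i} (q_i - q_k + g)/(q_i - q_k) equals M (i.e., the limit of sinh(Mγ)/sinh(γ) as γ → 0 after rescaling). -/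
open Polynomial Finset

lemma coeff_prod_linear (M : ℕ) (hM : 0 < M) (r : Fin M → ℝ) :
    (∏ k : Fin M, (X + C (r k))).coeff (M - 1) = ∑ k, r k := by
  rw [Finset.prod_X_add_C_coeff (h := by simp [Nat.sub_le])]
  have h1 : #(univ : Finset (Fin M)) - (M - 1) = 1 := by simp; omega
  rw [h1, Finset.powersetCard_one, Finset.sum_map]
  simp

lemma coeff_basis (M : ℕ) (q : Fin M → ℝ) (hq : Function.Injective q) (i : Fin M) :
    (Lagrange.basis univ q i).coeff (M - 1) = ∏ j ∈ univ.erase i, (q i - q j)⁻¹ := by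
  have hinj : Set.InjOn q (univ : Finset (Fin M)) := hq.injOn
  have hnd := Lagrange.natDegree_basis hinj (mem_univ i)
  simp only [card_univ, Fintype.card_fin] at hnd
  rw [← hnd, Polynomial.coeff_natDegree, Lagrange.basis, leadingCoeff_prod]
  refine Finset.prod_congr rfl fun j hj => ?_
  have hne : q i ≠ q j := fun h => (mem_erase.1 hj).1.symm (hq h)
  rw [Lagrange.basisDivisor, leadingCoeff_mul, leadingCoeff_C, (monic_X_sub_C _).leadingCoeff, mul_one]

/-- rational degeneration of the Liouville identity:
`∑_i ∏_{k ≠ i} (q_i - q_k + g)/(q_i - q_k) = M` for pairwise distinct real `q_i`. -/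
theorem liouville_identity_rational (g : ℝ) (M : ℕ) (q : Fin M → ℝ)
    (hq : Function.Injective q) :
    ∑ i : Fin M, ∏ k ∈ Finset.univ.erase i, (q i - q k + g) / (q i - q k) = (M : ℝ) := by
  rcases Nat.eq_zero_or_pos M with hM | hM
  · subst hM; simp
  by_cases hg : g = 0
  · subst hg
    have : ∀ i : Fin M, ∏ k ∈ univ.erase i, (q i - q k + 0) / (q i - q k) = 1 := by
      intro i
      refine Finset.prod_eq_one fun k hk => ?_
      have : q i - q k ≠ 0 := sub_ne_zero.2 fun h => (mem_erase.1 hk).1 (hq h.symm)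
      field_simp
      ring
    calc ∑ i : Fin M, ∏ k ∈ univ.erase i, (q i - q k + 0) / (q i - q k)
        = ∑ _i : Fin M, (1:ℝ) := Finset.sum_congr rfl fun i _ => this i
      _ = M := by simp
  · set A : ℝ[X] := ∏ k : Fin M, (X + C (g - q k)) with hA
    set B : ℝ[X] := ∏ k : Fin M, (X + C (-(q k))) with hB
    have hAm : A.Monic := monic_prod_of_monic _ _ fun _ _ => monic_X_add_C _
    have hBm : B.Monic := monic_prod_of_monic _ _ fun _ _ => monic_X_add_C _
    have hAd : A.natDegree = M := by
      rw [hA, natDegree_prod _ _ fun k _ => (monic_X_add_C _).ne_zero,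
        Finset.sum_congr rfl fun k _ => natDegree_X_add_C _]
      simp
    have hBd : B.natDegree = M := by
      rw [hB, natDegree_prod _ _ fun k _ => (monic_X_add_C _).ne_zero,
        Finset.sum_congr rfl fun k _ => natDegree_X_add_C _]
      simp
    have hdeg : (A - B).degree < (M : ℕ) := by
      have := Polynomial.degree_sub_lt
        (by rw [Polynomial.degree_eq_natDegree hAm.ne_zero,
          Polynomial.degree_eq_natDegree hBm.ne_zero, hAd, hBd])
        hAm.ne_zero (hAm.leadingCoeff.trans hBm.leadingCoeff.symm)
      rwa [Polynomial.degree_eq_natDegree hAm.ne_zero, hAd] at this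
    have hinj : Set.InjOn q (univ : Finset (Fin M)) := hq.injOn
    have hQ := Lagrange.eq_interpolate hinj (f := A - B) (by simpa using hdeg)
    have hco : (A - B).coeff (M - 1) = M * g := by
      rw [coeff_sub, hA, hB, coeff_prod_linear M hM, coeff_prod_linear M hM]
      rw [Finset.sum_sub_distrib]
      simp [Finset.sum_neg_distrib, mul_comm]
    have key : (M : ℝ) * g
        = ∑ i : Fin M, (A - B).eval (q i) * ∏ j ∈ univ.erase i, (q i - q j)⁻¹ := by
      rw [← hco]
      conv_lhs => rw [hQ]
      rw [Lagrange.interpolate_apply, finset_sum_coeff]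
      refine Finset.sum_congr rfl fun i _ => ?_
      rw [coeff_C_mul, coeff_basis M q hq i]
    have heval : ∀ i : Fin M, (A - B).eval (q i)
        = g * ∏ k ∈ univ.erase i, (q i - q k + g) := by
      intro i
      rw [eval_sub, hA, hB, eval_prod, eval_prod]
      have hBz : ∏ k : Fin M, eval (q i) (X + C (-(q k))) = 0 :=
        Finset.prod_eq_zero (mem_univ i) (by simp)
      rw [hBz, sub_zero, ← Finset.mul_prod_erase univ _ (mem_univ i)]
      simp only [eval_add, eval_X, eval_C]
      ring_nf
    have key2 : (M : ℝ) * g = g * ∑ i : Fin M,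
        ∏ k ∈ univ.erase i, (q i - q k + g) / (q i - q k) := by
      rw [key, Finset.mul_sum]
      refine Finset.sum_congr rfl fun i _ => ?_
      rw [heval i, Finset.prod_div_distrib, div_eq_mul_inv, Finset.prod_inv_distrib]
      ring
    rw [mul_comm (M:ℝ) g] at key2
    exact (mul_left_cancel₀ hg key2).symm
end

section
/- Under the folding identification q_{-i} = -q_i, θ_{-i} = -θ_i (for i = 1,...,N), q₀ = 0, q_{0̄} = T/2, θ₀ = θ_{0̄} = 0, the Hamiltonians K_l = ∑_{|I|=l} e^{-βθ_I} f_I and K_{-l} = ∑_{|I|=l} e^{βθ_I} f_I are equal, where f_I = ∏_{i∈I, k∉I} f(q_i - q_k)^{1/2}, using that f is even and T-periodic. -/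
/-- on the folded configuration (`q_{-i} = -q_i`, `θ_{-i} = -θ_i`,
`q₀ = 0`, `q_{0̄} = T/2`, `θ₀ = θ_{0̄} = 0`) the Hamiltonians
`K_l = ∑_{|I|=l} e^{-βθ_I} f_I` and `K_{-l} = ∑_{|I|=l} e^{βθ_I} f_I` coincide.
The index set `{-N,…,-1,0,0̄,1,…,N}` is modelled by `Fin N ⊕ Fin N ⊕ Bool`;
`sqrtf` is a consistent branch of `f^{1/2}` (even, `T`-periodic, with
`sqrtf x ^ 2 = f x` wherever `f` is defined). -/
theorem folded_K_l_eq_K_neg_l (N l : ℕ) (β ν γ : ℂ) (hν : ν ≠ 0)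
    (q θ : Fin N → ℂ) (sqrtf : ℂ → ℂ)
    (hsq : ∀ x : ℂ, Complex.sinh (ν * x / 2) ≠ 0 →
      sqrtf x ^ 2 = 1 - Complex.sinh γ ^ 2 / Complex.sinh (ν * x / 2) ^ 2)
    (heven : ∀ x, sqrtf (-x) = sqrtf x)
    (hper : ∀ x, sqrtf (x + 2 * (Real.pi : ℂ) * Complex.I / ν) = sqrtf x)
    (Q Θ : Fin N ⊕ Fin N ⊕ Bool → ℂ)
    (hQ : ∀ i, Q (Sum.inl i) = q i)
    (hQ' : ∀ i, Q (Sum.inr (Sum.inl i)) = -q i)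
    (hQ0 : Q (Sum.inr (Sum.inr false)) = 0)
    (hQb : Q (Sum.inr (Sum.inr true)) = (Real.pi : ℂ) * Complex.I / ν)
    (hΘ : ∀ i, Θ (Sum.inl i) = θ i)
    (hΘ' : ∀ i, Θ (Sum.inr (Sum.inl i)) = -θ i)
    (hΘ0 : Θ (Sum.inr (Sum.inr false)) = 0)
    (hΘb : Θ (Sum.inr (Sum.inr true)) = 0) :
    ∑ I ∈ (Finset.univ : Finset (Fin N ⊕ Fin N ⊕ Bool)).powersetCard l,
        Complex.exp (-β * ∑ i ∈ I, Θ i) * ∏ i ∈ I, ∏ k ∈ Iᶜ, sqrtf (Q i - Q k) =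
      ∑ I ∈ (Finset.univ : Finset (Fin N ⊕ Fin N ⊕ Bool)).powersetCard l,
        Complex.exp (β * ∑ i ∈ I, Θ i) * ∏ i ∈ I, ∏ k ∈ Iᶜ, sqrtf (Q i - Q k) := by
  classical
  -- the folding involution
  let σ : (Fin N ⊕ Fin N ⊕ Bool) → (Fin N ⊕ Fin N ⊕ Bool) := fun x => match x with
    | .inl i => .inr (.inl i)
    | .inr (.inl i) => .inl i
    | .inr (.inr b) => .inr (.inr b)
  have hinv : Function.Involutive σ := by
    intro x; rcases x with i | i | b <;> rfl
  let e : Equiv.Perm (Fin N ⊕ Fin N ⊕ Bool) := hinv.toPerm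
  -- periodicity both ways
  have hper' : ∀ x, sqrtf (x - 2 * (Real.pi : ℂ) * Complex.I / ν) = sqrtf x := by
    intro x
    have := hper (x - 2 * (Real.pi : ℂ) * Complex.I / ν)
    simpa using this.symm
  -- Θ is negated by σ
  have hΘσ : ∀ i, Θ (σ i) = -Θ i := by
    intro i
    rcases i with i | i | b
    · show Θ (Sum.inr (Sum.inl i)) = -Θ (Sum.inl i); rw [hΘ, hΘ']
    · show Θ (Sum.inl i) = -Θ (Sum.inr (Sum.inl i)); rw [hΘ, hΘ', neg_neg]
    · cases b
      · show Θ (Sum.inr (Sum.inr false)) = -Θ (Sum.inr (Sum.inr false)); rw [hΘ0]; ring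
      · show Θ (Sum.inr (Sum.inr true)) = -Θ (Sum.inr (Sum.inr true)); rw [hΘb]; ring
  -- Q is negated by σ up to a period shift at the special point 0̄
  have hQσ : ∀ i, Q (σ i) = -Q i +
      (if i = Sum.inr (Sum.inr true) then 2 * (Real.pi : ℂ) * Complex.I / ν else 0) := by
    intro i
    rcases i with i | i | b
    · show Q (Sum.inr (Sum.inl i)) = -Q (Sum.inl i) + _
      rw [hQ, hQ', if_neg (by simp), add_zero]
    · show Q (Sum.inl i) = -Q (Sum.inr (Sum.inl i)) + _
      rw [hQ, hQ', if_neg (by simp), add_zero, neg_neg]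
    · cases b
      · show Q (Sum.inr (Sum.inr false)) = -Q (Sum.inr (Sum.inr false)) + _
        rw [hQ0, if_neg (by simp)]; ring
      · show Q (Sum.inr (Sum.inr true)) = -Q (Sum.inr (Sum.inr true)) + _
        rw [hQb, if_pos rfl]; field_simp; ring
  -- the key invariance of sqrtf (Q i - Q k)
  have hkey : ∀ i k, sqrtf (Q (σ i) - Q (σ k)) = sqrtf (Q i - Q k) := by
    intro i k
    rw [hQσ i, hQσ k]
    split_ifs
    · rw [show -Q i + 2 * (Real.pi : ℂ) * Complex.I / ν -
        (-Q k + 2 * (Real.pi : ℂ) * Complex.I / ν) = -(Q i - Q k) by ring, heven]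
    · rw [show -Q i + 2 * (Real.pi : ℂ) * Complex.I / ν - (-Q k + 0)
        = -(Q i - Q k) + 2 * (Real.pi : ℂ) * Complex.I / ν by ring, hper, heven]
    · rw [show -Q i + 0 - (-Q k + 2 * (Real.pi : ℂ) * Complex.I / ν)
        = -(Q i - Q k) - 2 * (Real.pi : ℂ) * Complex.I / ν by ring, hper', heven]
    · rw [show -Q i + 0 - (-Q k + 0) = -(Q i - Q k) by ring, heven]
  -- the bijection on subsets
  refine Finset.sum_nbij' (fun I => I.map e.toEmbedding)
      (fun I => I.map e.toEmbedding) ?_ ?_ ?_ ?_ ?_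
  · intro I hI
    simp only [Finset.mem_powersetCard] at hI ⊢
    exact ⟨Finset.subset_univ _, by rw [Finset.card_map]; exact hI.2⟩
  · intro I hI
    simp only [Finset.mem_powersetCard] at hI ⊢
    exact ⟨Finset.subset_univ _, by rw [Finset.card_map]; exact hI.2⟩
  · intro I _
    ext x
    simp only [Finset.mem_map, Equiv.coe_toEmbedding]
    constructor
    · rintro ⟨y, ⟨z, hz, rfl⟩, rfl⟩
      simpa [e, hinv z] using hz
    · intro hx
      exact ⟨e x, ⟨x, hx, rfl⟩, by simpa [e] using hinv x⟩
  · intro I _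
    ext x
    simp only [Finset.mem_map, Equiv.coe_toEmbedding]
    constructor
    · rintro ⟨y, ⟨z, hz, rfl⟩, rfl⟩
      simpa [e, hinv z] using hz
    · intro hx
      exact ⟨e x, ⟨x, hx, rfl⟩, by simpa [e] using hinv x⟩
  · intro I _
    have hcompl : (I.map e.toEmbedding)ᶜ = Iᶜ.map e.toEmbedding := by
      ext x
      simp only [Finset.mem_compl, Finset.mem_map, Equiv.coe_toEmbedding]
      constructor
      · intro hx
        refine ⟨σ x, fun hmem => hx ⟨σ x, hmem, by simpa [e] using hinv x⟩,
          by simpa [e] using hinv x⟩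
      · rintro ⟨y, hy, rfl⟩ ⟨z, hz, hzy⟩
        have : z = y := by
          have := congrArg σ hzy
          simpa [e, hinv z, hinv y] using this
        exact hy (this ▸ hz)
    have hsum : ∑ i ∈ I.map e.toEmbedding, Θ i = -∑ i ∈ I, Θ i := by
      rw [Finset.sum_map]
      simp only [Equiv.coe_toEmbedding]
      rw [← Finset.sum_neg_distrib]
      exact Finset.sum_congr rfl fun i _ => by simpa [e] using hΘσ i
    have hprod : ∏ i ∈ I.map e.toEmbedding, ∏ k ∈ (I.map e.toEmbedding)ᶜ, sqrtf (Q i - Q k)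
        = ∏ i ∈ I, ∏ k ∈ Iᶜ, sqrtf (Q i - Q k) := by
      rw [hcompl, Finset.prod_map]
      refine Finset.prod_congr rfl fun i _ => ?_
      rw [Finset.prod_map]
      exact Finset.prod_congr rfl fun k _ => by simpa [e] using hkey i k
    show _ = Complex.exp (β * ∑ i ∈ I.map e.toEmbedding, Θ i) *
        ∏ i ∈ I.map e.toEmbedding, ∏ k ∈ (I.map e.toEmbedding)ᶜ, sqrtf (Q i - Q k)
    rw [hsum, hprod, mul_neg, ← neg_mul]
end

section
/- For the folded system, the p=1 external-field coefficients satisfy U_{K,1} = 𝒰_{K,1} − sinh(γ(2|K|+2))/sinh(γ), where 𝒰_{K,1} = ∏_{k∈𝒜_K, k≠0} v(q_k) + ∏_{k∈𝒜_K, k≠0̄} v(T/2 − q_k) and U_{K,1} = −∑_{i∈𝒜_K∖{0,0̄}} ∏_{k∈𝒜_K, k≠i} v(q_i − q_k). -/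
/-- The function `v(q) = sinh(νq/2 + γ)/sinh(νq/2)`. -/
noncomputable def vRS (ν γ x : ℂ) : ℂ :=
  Complex.sinh (ν * x / 2 + γ) / Complex.sinh (ν * x / 2)

open Finset Polynomial

/-- sinh in terms of shifted exponentials. -/
lemma sinh_shift (z c : ℂ) :
    Complex.sinh z = (Complex.exp (z + c) - Complex.exp (c - z)) / (2 * Complex.exp c) := by
  have hz := Complex.exp_ne_zero z
  have hc := Complex.exp_ne_zero c
  rw [Complex.sinh, Complex.exp_add, Complex.exp_sub, Complex.exp_neg]
  field_simp

lemma sinh_half (ν u w : ℂ) :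
    Complex.sinh (ν * (u - w) / 2)
      = (Complex.exp (ν * u) - Complex.exp (ν * w)) / (2 * Complex.exp (ν * (u + w) / 2)) := by
  rw [sinh_shift (ν * (u - w) / 2) (ν * (u + w) / 2),
    show ν * (u - w) / 2 + ν * (u + w) / 2 = ν * u by ring,
    show ν * (u + w) / 2 - ν * (u - w) / 2 = ν * w by ring]

/-- `v` in rational (exponential-coordinate) form. -/
lemma vRS_ratio (ν γ u w : ℂ) (hs : Complex.sinh (ν * (u - w) / 2) ≠ 0) :
    vRS ν γ (u - w) = (Complex.exp γ * Complex.exp (ν * u) - Complex.exp (-γ) * Complex.exp (ν * w))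
      / (Complex.exp (ν * u) - Complex.exp (ν * w)) := by
  have hc := Complex.exp_ne_zero (ν * (u + w) / 2)
  have h1 : Complex.sinh (ν * (u - w) / 2 + γ)
      = (Complex.exp γ * Complex.exp (ν * u) - Complex.exp (-γ) * Complex.exp (ν * w))
        / (2 * Complex.exp (ν * (u + w) / 2)) := by
    rw [sinh_shift (ν * (u - w) / 2 + γ) (ν * (u + w) / 2),
      show ν * (u - w) / 2 + γ + ν * (u + w) / 2 = γ + ν * u by ring,
      show ν * (u + w) / 2 - (ν * (u - w) / 2 + γ) = -γ + ν * w by ring,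
      Complex.exp_add, Complex.exp_add]
  have hden : Complex.exp (ν * u) - Complex.exp (ν * w) ≠ 0 := by
    intro h
    exact hs (by rw [sinh_half, h, zero_div])
  rw [vRS, h1, sinh_half]
  rw [div_div_div_eq, div_eq_div_iff (by exact mul_ne_zero (by simp) hden) hden]
  ring

/-- Liouville-type identity via Lagrange interpolation. -/
lemma liouville_identity_s13 {ι : Type*} [Fintype ι] [DecidableEq ι]
    (a b : ℂ) (ha : a ≠ 0) (hab : a ≠ b)
    (x : ι → ℂ) (hx0 : ∀ i, x i ≠ 0) (hinj : Function.Injective x) :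
    ∑ i, ∏ k ∈ univ.erase i, (a * x i - b * x k) / (x i - x k)
      = (a ^ Fintype.card ι - b ^ Fintype.card ι) / (a - b) := by
  classical
  set N := Fintype.card ι with hN
  set p : ℂ[X] := ∏ k, (X - C (b / a * x k)) with hp
  set m : ℂ[X] := ∏ k, (X - C (x k)) with hm
  have hpm : p.Monic := monic_prod_of_monic _ _ fun k _ => monic_X_sub_C _
  have hmm : m.Monic := monic_prod_of_monic _ _ fun k _ => monic_X_sub_C _
  have hpd : p.natDegree = N := by
    rw [hp, natDegree_prod _ _ fun k _ => X_sub_C_ne_zero _]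
    simp only [natDegree_X_sub_C, sum_const, card_univ, smul_eq_mul, mul_one]
    exact hN.symm
  have hmd : m.natDegree = N := by
    rw [hm, natDegree_prod _ _ fun k _ => X_sub_C_ne_zero _]
    simp only [natDegree_X_sub_C, sum_const, card_univ, smul_eq_mul, mul_one]
    exact hN.symm
  set f : ℂ[X] := C (a ^ N) * (p - m) with hf
  have hdeg : f.degree < (#(univ : Finset ι) : ℕ) := by
    have hdp : p.degree = (N : WithBot ℕ) := by
      rw [degree_eq_natDegree hpm.ne_zero, hpd]
    have hdm : m.degree = (N : WithBot ℕ) := by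
      rw [degree_eq_natDegree hmm.ne_zero, hmd]
    have h2 := degree_sub_lt (hdp.trans hdm.symm) hpm.ne_zero
      (by rw [hpm.leadingCoeff, hmm.leadingCoeff])
    rw [hdp] at h2
    calc f.degree = (p - m).degree := by
          rw [hf, degree_C_mul (pow_ne_zero _ ha)]
      _ < (N : WithBot ℕ) := h2
      _ = ((#(univ : Finset ι) : ℕ) : WithBot ℕ) := by rw [hN, card_univ]
  have hkey : f = Lagrange.interpolate univ x fun i => f.eval (x i) :=
    Lagrange.eq_interpolate (hinj.injOn) hdeg
  set P : ℂ := ∏ k, (-(x k)) with hPdef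
  have hP : P ≠ 0 := prod_ne_zero_iff.mpr fun k _ => neg_ne_zero.mpr (hx0 k)
  have hE := congrArg (Polynomial.eval 0) hkey
  have hevp : p.eval 0 = (b / a) ^ N * P := by
    rw [hp, eval_prod, hPdef, hN, ← card_univ, ← prod_const, ← prod_mul_distrib]
    exact prod_congr rfl fun k _ => by simp only [eval_sub, eval_X, eval_C, zero_sub]; ring
  have hevm : m.eval 0 = P := by
    rw [hm, eval_prod, hPdef]
    exact prod_congr rfl fun k _ => by simp
  have hL : f.eval 0 = (b ^ N - a ^ N) * P := by
    rw [hf, eval_mul, eval_C, eval_sub, hevp, hevm]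
    field_simp
    rw [div_pow, mul_sub, mul_div_cancel₀ _ (pow_ne_zero _ ha), mul_one]
  have hmev : ∀ i : ι, m.eval (x i) = 0 := by
    intro i
    rw [hm, eval_prod]
    exact prod_eq_zero (mem_univ i) (by simp)
  have hfev : ∀ i : ι, f.eval (x i) = ∏ k, (a * x i - b * x k) := by
    intro i
    rw [hf, eval_mul, eval_C, eval_sub, hmev, sub_zero, hp, eval_prod,
      hN, ← card_univ, ← prod_const, ← prod_mul_distrib]
    exact prod_congr rfl fun k _ => by
      simp only [eval_sub, eval_X, eval_C]
      field_simp
  have hbev : ∀ i : ι, (Lagrange.basis univ x i).eval 0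
      = ∏ j ∈ univ.erase i, ((x i - x j)⁻¹ * (0 - x j)) := by
    intro i
    rw [Lagrange.basis, eval_prod]
    exact prod_congr rfl fun j _ => by simp [Lagrange.basisDivisor]
  have hR : (Lagrange.interpolate univ x fun i => f.eval (x i)).eval 0
      = ∑ i, (∏ k, (a * x i - b * x k)) * ∏ j ∈ univ.erase i, ((x i - x j)⁻¹ * (0 - x j)) := by
    rw [Lagrange.interpolate_apply, eval_finset_sum]
    exact sum_congr rfl fun i _ => by rw [eval_mul, eval_C, hfev, hbev]
  have hterm : ∀ i : ι,
      (∏ k, (a * x i - b * x k)) * ∏ j ∈ univ.erase i, ((x i - x j)⁻¹ * (0 - x j))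
        = -((a - b) * P * ∏ j ∈ univ.erase i, ((a * x i - b * x j) / (x i - x j))) := by
    intro i
    rw [← mul_prod_erase univ _ (mem_univ i), hPdef, ← mul_prod_erase univ _ (mem_univ i)]
    have h2 : (∏ j ∈ univ.erase i, (a * x i - b * x j))
          * ∏ j ∈ univ.erase i, ((x i - x j)⁻¹ * (0 - x j))
        = (∏ j ∈ univ.erase i, (-(x j)))
          * ∏ j ∈ univ.erase i, ((a * x i - b * x j) / (x i - x j)) := by
      rw [← prod_mul_distrib, ← prod_mul_distrib]
      exact prod_congr rfl fun j _ => by ring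
    rw [mul_assoc, h2]
    ring
  rw [hL, hR] at hE
  simp only [hterm] at hE
  rw [sum_neg_distrib, ← mul_sum] at hE
  set S : ℂ := ∑ i, ∏ k ∈ univ.erase i, (a * x i - b * x k) / (x i - x k) with hS
  have hcan : ((a - b) * S) * P = (a ^ N - b ^ N) * P := by linear_combination hE
  have hfin := mul_right_cancel₀ hP hcan
  rw [eq_div_iff (sub_ne_zero.mpr hab)]
  linear_combination hfin

/-- The involution swapping the two `Fin n` components. -/
def swapIdx {n : ℕ} : (Fin n ⊕ Fin n ⊕ Bool) → (Fin n ⊕ Fin n ⊕ Bool)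
  | Sum.inl i => Sum.inr (Sum.inl i)
  | Sum.inr (Sum.inl i) => Sum.inl i
  | Sum.inr (Sum.inr c) => Sum.inr (Sum.inr c)

/-- `U_{K,1} = 𝒰_{K,1} − sinh(γ(2|K|+2))/sinh γ`.
The index set `𝒜_K = K ∪ (−K) ∪ {0, 0̄}` is modelled by `Fin n ⊕ Fin n ⊕ Bool`
(`n = |K|`), with positions `q_k`, `−q_k`, `q₀ = 0`, `q_{0̄} = T/2 = πi/ν`. -/
theorem U_K1_eq_calU_K1_sub_liouville (n : ℕ) (ν γ : ℂ) (hν : ν ≠ 0)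
    (hγ : Complex.sinh γ ≠ 0) (q : Fin n → ℂ)
    (Q : Fin n ⊕ Fin n ⊕ Bool → ℂ)
    (hQ : ∀ i, Q (Sum.inl i) = q i)
    (hQ' : ∀ i, Q (Sum.inr (Sum.inl i)) = -q i)
    (hQ0 : Q (Sum.inr (Sum.inr false)) = 0)
    (hQb : Q (Sum.inr (Sum.inr true)) = (Real.pi : ℂ) * Complex.I / ν)
    (hreg : ∀ i k : Fin n ⊕ Fin n ⊕ Bool, i ≠ k →
      Complex.sinh (ν * (Q i - Q k) / 2) ≠ 0) :
    -(∑ i ∈ Finset.univ.filter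
          (fun i : Fin n ⊕ Fin n ⊕ Bool =>
            i ≠ Sum.inr (Sum.inr false) ∧ i ≠ Sum.inr (Sum.inr true)),
        ∏ k ∈ Finset.univ.erase i, vRS ν γ (Q i - Q k)) =
      ((∏ k ∈ Finset.univ.erase (Sum.inr (Sum.inr false) : Fin n ⊕ Fin n ⊕ Bool),
            vRS ν γ (Q k)) +
          ∏ k ∈ Finset.univ.erase (Sum.inr (Sum.inr true) : Fin n ⊕ Fin n ⊕ Bool),
            vRS ν γ ((Real.pi : ℂ) * Complex.I / ν - Q k)) -
        Complex.sinh (γ * (2 * n + 2)) / Complex.sinh γ := by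
  classical
  set f0 : (Fin n ⊕ Fin n ⊕ Bool) := Sum.inr (Sum.inr false) with hf0
  set t0 : (Fin n ⊕ Fin n ⊕ Bool) := Sum.inr (Sum.inr true) with ht0
  set a := Complex.exp γ with ha'
  set b := Complex.exp (-γ) with hb'
  have ha : a ≠ 0 := Complex.exp_ne_zero _
  have hb : b ≠ 0 := Complex.exp_ne_zero _
  have hab2 : a - b = 2 * Complex.sinh γ := by rw [ha', hb', Complex.sinh]; ring
  have hab : a ≠ b := by
    intro h
    apply hγ
    have : (2 : ℂ) * Complex.sinh γ = 0 := by rw [← hab2, h, sub_self]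
    simpa using this
  set x : (Fin n ⊕ Fin n ⊕ Bool) → ℂ := fun j => Complex.exp (ν * Q j) with hx'
  have hx0 : ∀ j, x j ≠ 0 := fun j => Complex.exp_ne_zero _
  have hxinj : Function.Injective x := by
    intro i k h
    by_contra hik
    apply hreg i k hik
    rw [sinh_half, show Complex.exp (ν * Q i) = Complex.exp (ν * Q k) from h, sub_self, zero_div]
  have hv : ∀ i k : (Fin n ⊕ Fin n ⊕ Bool), i ≠ k →
      vRS ν γ (Q i - Q k) = (a * x i - b * x k) / (x i - x k) :=
    fun i k hik => vRS_ratio ν γ (Q i) (Q k) (hreg i k hik)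
  -- exponential coordinates of the special points
  have hxf0 : x f0 = 1 := by rw [hx']; simp [hQ0]
  have hxt0 : x t0 = -1 := by
    rw [hx']
    simp only [hQb]
    rw [show ν * ((Real.pi : ℂ) * Complex.I / ν) = (Real.pi : ℂ) * Complex.I by field_simp]
    exact Complex.exp_pi_mul_I
  -- the full Liouville sum
  have hfull : ∑ i : (Fin n ⊕ Fin n ⊕ Bool), ∏ k ∈ univ.erase i, vRS ν γ (Q i - Q k)
      = Complex.sinh (γ * (2 * n + 2)) / Complex.sinh γ := by
    have h1 : ∀ i : (Fin n ⊕ Fin n ⊕ Bool), ∏ k ∈ univ.erase i, vRS ν γ (Q i - Q k)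
        = ∏ k ∈ univ.erase i, (a * x i - b * x k) / (x i - x k) := fun i =>
      prod_congr rfl fun k hk => hv i k (Ne.symm (mem_erase.mp hk).1)
    simp only [h1]
    rw [liouville_identity_s13 a b ha hab x hx0 hxinj]
    have hcard : Fintype.card (Fin n ⊕ Fin n ⊕ Bool) = 2 * n + 2 := by
      simp [Fintype.card_sum]
      ring
    rw [hcard, ha', hb', ← Complex.exp_nat_mul, ← Complex.exp_nat_mul,
      show ((2 * n + 2 : ℕ) : ℂ) * -γ = -(((2 * n + 2 : ℕ) : ℂ) * γ) by ring,
      show γ * (2 * (n : ℂ) + 2) = ((2 * n + 2 : ℕ) : ℂ) * γ by push_cast; ring,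
      Complex.sinh, Complex.sinh]
    have hne : Complex.exp γ - Complex.exp (-γ) ≠ 0 := sub_ne_zero.mpr hab
    have hne2 : Complex.sinh γ ≠ 0 := hγ
    field_simp
  -- split the sum
  have hsplit := sum_filter_add_sum_filter_not univ
    (fun i : (Fin n ⊕ Fin n ⊕ Bool) => i ≠ f0 ∧ i ≠ t0)
    (fun i => ∏ k ∈ univ.erase i, vRS ν γ (Q i - Q k))
  have hset : univ.filter (fun i : (Fin n ⊕ Fin n ⊕ Bool) => ¬(i ≠ f0 ∧ i ≠ t0)) = {f0, t0} := by
    ext i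
    simp only [mem_filter, mem_univ, true_and, mem_insert, mem_singleton]
    rw [not_and_or, not_ne_iff, not_ne_iff]
  rw [hset, sum_pair (by simp [hf0, ht0])] at hsplit
  -- the 0̄ term
  have htt : ∏ k ∈ univ.erase t0, vRS ν γ (Q t0 - Q k)
      = ∏ k ∈ univ.erase t0, vRS ν γ ((Real.pi : ℂ) * Complex.I / ν - Q k) :=
    prod_congr rfl fun k _ => by rw [hQb]
  -- the 0 term, via the swap involution
  have hswap : vRS ν γ (Q f0 - Q t0) = vRS ν γ (Q t0 - Q f0) := by
    rw [hv f0 t0 (by simp [hf0, ht0]), hv t0 f0 (by simp [hf0, ht0]), hxf0, hxt0]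
    ring_nf
  have htf : ∏ k ∈ univ.erase f0, vRS ν γ (Q f0 - Q k)
      = ∏ k ∈ univ.erase f0, vRS ν γ (Q k) := by
    refine prod_nbij' swapIdx swapIdx ?_ ?_ ?_ ?_ ?_
    · rintro (i | i | c) hia
      · simp [swapIdx, hf0]
      · simp [swapIdx, hf0]
      · simpa [swapIdx, hf0] using hia
    · rintro (i | i | c) hia
      · simp [swapIdx, hf0]
      · simp [swapIdx, hf0]
      · simpa [swapIdx, hf0] using hia
    · rintro (i | i | c) _ <;> rfl
    · rintro (i | i | c) _ <;> rfl
    · rintro (i | i | c) hia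
      · show vRS ν γ (Q f0 - Q (Sum.inl i)) = vRS ν γ (Q (Sum.inr (Sum.inl i)))
        rw [hQ0, hQ, hQ', zero_sub]
      · show vRS ν γ (Q f0 - Q (Sum.inr (Sum.inl i))) = vRS ν γ (Q (Sum.inl i))
        rw [hQ0, hQ', hQ, zero_sub, neg_neg]
      · have hc : c = true := by
          by_contra hc
          simp only [Bool.not_eq_true] at hc
          subst hc
          exact (mem_erase.mp hia).1 rfl
        subst hc
        show vRS ν γ (Q f0 - Q t0) = vRS ν γ (Q t0)
        rw [hswap, hQ0, sub_zero]
  linear_combination -hsplit - hfull + htf + htt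
end

section
/- Product identity for folded potentials: with positions satisfying the folding relations (q_{-j} = −q_j etc.), one has V_{εJ;J^c} · V_{−εJ;J^c} = ∏_{j∈εJ} w_r(q_j) w_r(−q_j) · f_{εJ}², where V_{εJ;K} = ∏_{j∈εJ} w_r(q_j) ∏_{j∈εJ, k∈𝒜_K∪(−εJ)} v(q_j − q_k), f_{εJ} = ∏_{j∈εJ, k∉εJ} f(q_j − q_k)^{1/2}, and f(q) = v(q)v(−q). -/
lemma sinh_add_pi_I (y : ℂ) :
    Complex.sinh (y + (Real.pi : ℂ) * Complex.I) = -Complex.sinh y := by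
  rw [Complex.sinh_add, Complex.sinh_mul_I, Complex.cosh_mul_I]
  simp [Complex.sin_pi, Complex.cos_pi]

lemma vRS_period (ν γ : ℂ) (hν : ν ≠ 0) (x : ℂ) :
    vRS ν γ (x + 2 * (Real.pi : ℂ) * Complex.I / ν) = vRS ν γ x := by
  have h : ν * (x + 2 * (Real.pi : ℂ) * Complex.I / ν) / 2
      = ν * x / 2 + (Real.pi : ℂ) * Complex.I := by field_simp
  unfold vRS
  rw [h, add_right_comm, sinh_add_pi_I, sinh_add_pi_I, neg_div_neg_eq]

/-- The folding involution on the index set. -/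
def negI {N : ℕ} : (Fin N ⊕ Fin N ⊕ Bool) → (Fin N ⊕ Fin N ⊕ Bool)
  | Sum.inl j => Sum.inr (Sum.inl j)
  | Sum.inr (Sum.inl j) => Sum.inl j
  | Sum.inr (Sum.inr b) => Sum.inr (Sum.inr b)

lemma negI_negI {N : ℕ} : ∀ i : Fin N ⊕ Fin N ⊕ Bool, negI (negI i) = i := by
  rintro (j | j | b) <;> rfl

lemma negI_inj {N : ℕ} : Function.Injective (negI (N := N)) :=
  Function.Involutive.injective negI_negI

lemma mem_image_negI {N : ℕ} (S : Finset (Fin N ⊕ Fin N ⊕ Bool))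
    (i : Fin N ⊕ Fin N ⊕ Bool) : i ∈ S.image negI ↔ negI i ∈ S := by
  constructor
  · intro h
    rcases Finset.mem_image.1 h with ⟨a, ha, rfl⟩
    rwa [negI_negI]
  · intro h
    exact Finset.mem_image.2 ⟨negI i, h, negI_negI i⟩

section MemLemmas

variable {N : ℕ} (J : Finset (Fin N)) (E : Fin N → Bool)

lemma mem_ite_image_inl (j : Fin N) :
    (Sum.inl j ∈ J.image
      (fun a => if E a then (Sum.inl a : Fin N ⊕ Fin N ⊕ Bool) else Sum.inr (Sum.inl a)))
      ↔ j ∈ J ∧ E j = true := by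
  simp only [Finset.mem_image]
  constructor
  · rintro ⟨a, ha, h⟩
    split_ifs at h with hE
    cases h; exact ⟨ha, hE⟩
  · rintro ⟨hj, hE⟩; exact ⟨j, hj, by simp [hE]⟩

lemma mem_ite_image_inr (j : Fin N) :
    (Sum.inr (Sum.inl j) ∈ J.image
      (fun a => if E a then (Sum.inl a : Fin N ⊕ Fin N ⊕ Bool) else Sum.inr (Sum.inl a)))
      ↔ j ∈ J ∧ E j = false := by
  simp only [Finset.mem_image]
  constructor
  · rintro ⟨a, ha, h⟩
    split_ifs at h with hE
    cases h; exact ⟨ha, by simpa using hE⟩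
  · rintro ⟨hj, hE⟩; exact ⟨j, hj, by simp [hE]⟩

lemma mem_ite_image_bool (b : Bool) :
    (Sum.inr (Sum.inr b) ∉ J.image
      (fun a => if E a then (Sum.inl a : Fin N ⊕ Fin N ⊕ Bool) else Sum.inr (Sum.inl a))) := by
  simp only [Finset.mem_image]
  rintro ⟨a, ha, h⟩
  split_ifs at h <;> simp at h

end MemLemmas

/-- product identity for folded potentials:
`V_{εJ;J^c} · V_{−εJ;J^c} = ∏_{j∈εJ} w_r(q_j) w_r(−q_j) · f_{εJ}²`.
The index set `{−N,…,−1,0,0̄,1,…,N}` is modelled by `Fin N ⊕ Fin N ⊕ Bool`,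
with folded positions `q_{-i} = −q_i`, `q₀ = 0`, `q_{0̄} = T/2 = πi/ν`.
The sign choice `ε ∈ {±1}^J` is encoded by `E : Fin N → Bool` (`E j = true`
meaning `ε_j = +1`); `εJ`, `−εJ` and `𝒜_K` (`K = J^c`) are the corresponding
subsets, and `f_{εJ} = ∏_{j∈εJ, k∉εJ} f(q_j − q_k)^{1/2}` is built from a
consistent square root `sqrtf` of `f = v(q)v(−q)`. -/
theorem folded_V_product_identity (N : ℕ) (ν γ : ℂ) (hν : ν ≠ 0)
    (q : Fin N → ℂ) (J : Finset (Fin N)) (E : Fin N → Bool)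
    (wr sqrtf : ℂ → ℂ)
    (hsq : ∀ x, sqrtf x ^ 2 = vRS ν γ x * vRS ν γ (-x))
    (Q : Fin N ⊕ Fin N ⊕ Bool → ℂ)
    (hQ : ∀ i, Q (Sum.inl i) = q i)
    (hQ' : ∀ i, Q (Sum.inr (Sum.inl i)) = -q i)
    (hQ0 : Q (Sum.inr (Sum.inr false)) = 0)
    (hQb : Q (Sum.inr (Sum.inr true)) = (Real.pi : ℂ) * Complex.I / ν)
    (hreg : ∀ i k : Fin N ⊕ Fin N ⊕ Bool, i ≠ k →
      Complex.sinh (ν * (Q i - Q k) / 2) ≠ 0)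
    (εJ negεJ AK : Finset (Fin N ⊕ Fin N ⊕ Bool))
    (hεJ : εJ = J.image (fun j => if E j then Sum.inl j else Sum.inr (Sum.inl j)))
    (hnegεJ : negεJ =
      J.image (fun j => if E j then Sum.inr (Sum.inl j) else Sum.inl j))
    (hAK : AK = (Jᶜ).image Sum.inl ∪ (Jᶜ).image (fun k => Sum.inr (Sum.inl k)) ∪
      {Sum.inr (Sum.inr false), Sum.inr (Sum.inr true)}) :
    ((∏ j ∈ εJ, wr (Q j)) * ∏ j ∈ εJ, ∏ k ∈ AK ∪ negεJ, vRS ν γ (Q j - Q k)) *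
        ((∏ j ∈ negεJ, wr (Q j)) * ∏ j ∈ negεJ, ∏ k ∈ AK ∪ εJ, vRS ν γ (Q j - Q k)) =
      (∏ j ∈ εJ, wr (Q j) * wr (-Q j)) *
        (∏ j ∈ εJ, ∏ k ∈ εJᶜ, sqrtf (Q j - Q k)) ^ 2 := by
  have hE' : ∀ j, (if E j then (Sum.inr (Sum.inl j) : Fin N ⊕ Fin N ⊕ Bool) else Sum.inl j)
      = (if (!E j) then (Sum.inl j : Fin N ⊕ Fin N ⊕ Bool) else Sum.inr (Sum.inl j)) := by
    intro j; cases hE : E j <;> simp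
  have hnegεJ' : negεJ = J.image
      (fun j => if (!E j) then (Sum.inl j : Fin N ⊕ Fin N ⊕ Bool) else Sum.inr (Sum.inl j)) := by
    rw [hnegεJ]; exact Finset.image_congr (fun j _ => hE' j)
  -- complement identities
  have hU1 : AK ∪ negεJ = εJᶜ := by
    ext i
    rw [Finset.mem_union, Finset.mem_compl, hAK]
    rcases i with j | j | b
    · rw [hεJ, mem_ite_image_inl, hnegεJ', mem_ite_image_inl]
      simp only [Finset.mem_union, Finset.mem_image, Finset.mem_compl,
        Finset.mem_insert, Finset.mem_singleton]
      cases hE : E j <;> by_cases hj : j ∈ J <;> simp [hj] <;> tauto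
    · rw [hεJ, mem_ite_image_inr, hnegεJ', mem_ite_image_inr]
      simp only [Finset.mem_union, Finset.mem_image, Finset.mem_compl,
        Finset.mem_insert, Finset.mem_singleton]
      cases hE : E j <;> by_cases hj : j ∈ J <;> simp [hj] <;> tauto
    · have h1 := mem_ite_image_bool J E b
      have h2 := mem_ite_image_bool J (fun j => !E j) b
      rw [← hεJ] at h1; rw [← hnegεJ'] at h2
      simp only [Finset.mem_union, Finset.mem_image, Finset.mem_insert, Finset.mem_singleton]
      cases b <;> simp [h1, h2]
  have hU2 : AK ∪ εJ = negεJᶜ := by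
    ext i
    rw [Finset.mem_union, Finset.mem_compl, hAK]
    rcases i with j | j | b
    · rw [hεJ, mem_ite_image_inl, hnegεJ', mem_ite_image_inl]
      simp only [Finset.mem_union, Finset.mem_image, Finset.mem_compl,
        Finset.mem_insert, Finset.mem_singleton]
      cases hE : E j <;> by_cases hj : j ∈ J <;> simp [hj] <;> tauto
    · rw [hεJ, mem_ite_image_inr, hnegεJ', mem_ite_image_inr]
      simp only [Finset.mem_union, Finset.mem_image, Finset.mem_compl,
        Finset.mem_insert, Finset.mem_singleton]
      cases hE : E j <;> by_cases hj : j ∈ J <;> simp [hj] <;> tauto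
    · have h1 := mem_ite_image_bool J E b
      have h2 := mem_ite_image_bool J (fun j => !E j) b
      rw [← hεJ] at h1; rw [← hnegεJ'] at h2
      simp only [Finset.mem_union, Finset.mem_image, Finset.mem_insert, Finset.mem_singleton]
      cases b <;> simp [h1, h2]
  -- image of εJ under the involution
  have himgε : εJ.image negI = negεJ := by
    rw [hεJ, hnegεJ, Finset.image_image]
    refine Finset.image_congr fun j _ => ?_
    cases hE : E j <;> simp [Function.comp, hE, negI]
  -- image of the complement under the involution
  have himgc : (εJᶜ).image negI = negεJᶜ := by
    ext i
    rw [mem_image_negI, Finset.mem_compl, Finset.mem_compl, ← himgε, mem_image_negI]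
  -- Q on negI of elements of εJ
  have hQnε : ∀ i ∈ εJ, Q (negI i) = -Q i := by
    intro i hi
    rw [hεJ] at hi
    rcases Finset.mem_image.1 hi with ⟨a, _, rfl⟩
    cases hE : E a <;> simp [hE, negI, hQ, hQ']
  -- Q on negI in general (up to a period)
  have hQn : ∀ i, Q (negI i) = -Q i ∨
      Q (negI i) = -Q i + 2 * (Real.pi : ℂ) * Complex.I / ν := by
    rintro (j | j | b)
    · left; simp [negI, hQ, hQ']
    · left; simp [negI, hQ, hQ']
    · cases b
      · left; simp [negI, hQ0]
      · right
        show Q (Sum.inr (Sum.inr true)) = _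
        rw [hQb]
        field_simp
        ring
  -- v is invariant under the involution (with arguments swapped)
  have hv : ∀ j ∈ εJ, ∀ k : Fin N ⊕ Fin N ⊕ Bool,
      vRS ν γ (Q (negI j) - Q (negI k)) = vRS ν γ (Q k - Q j) := by
    intro j hj k
    rw [hQnε j hj]
    rcases hQn k with h | h
    · rw [h]
      congr 1
      ring
    · rw [h]
      have h2 : -Q j - (-Q k + 2 * (Real.pi : ℂ) * Complex.I / ν)
          = (Q k - Q j - 2 * (Real.pi : ℂ) * Complex.I / ν) := by ring
      rw [h2]
      have h3 := vRS_period ν γ hν (Q k - Q j - 2 * (Real.pi : ℂ) * Complex.I / ν)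
      rw [sub_add_cancel] at h3
      exact h3.symm
  -- the wr-product over negεJ
  have hwr : ∏ j ∈ negεJ, wr (Q j) = ∏ j ∈ εJ, wr (-Q j) := by
    rw [← himgε, Finset.prod_image (fun a _ b _ h => negI_inj h)]
    exact Finset.prod_congr rfl fun j hj => by rw [hQnε j hj]
  -- the double v-product over negεJ
  have hvprod : ∏ j ∈ negεJ, ∏ k ∈ negεJᶜ, vRS ν γ (Q j - Q k)
      = ∏ j ∈ εJ, ∏ k ∈ εJᶜ, vRS ν γ (Q k - Q j) := by
    rw [← himgc, ← himgε, Finset.prod_image (fun a _ b _ h => negI_inj h)]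
    refine Finset.prod_congr rfl fun j hj => ?_
    rw [Finset.prod_image (fun a _ b _ h => negI_inj h)]
    exact Finset.prod_congr rfl fun k _ => hv j hj k
  -- the squared square-root product
  have hRHS : (∏ j ∈ εJ, ∏ k ∈ εJᶜ, sqrtf (Q j - Q k)) ^ 2
      = (∏ j ∈ εJ, ∏ k ∈ εJᶜ, vRS ν γ (Q j - Q k)) *
        ∏ j ∈ εJ, ∏ k ∈ εJᶜ, vRS ν γ (Q k - Q j) := by
    rw [← Finset.prod_mul_distrib]
    rw [← Finset.prod_pow]
    refine Finset.prod_congr rfl fun j _ => ?_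
    rw [← Finset.prod_pow, ← Finset.prod_mul_distrib]
    refine Finset.prod_congr rfl fun k _ => ?_
    rw [hsq, neg_sub]
  rw [hU1, hU2, hwr, hvprod, hRHS, Finset.prod_mul_distrib]
  ring
end
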